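/- The matrix I − R is invertible, its inverse equals the convergent Neumann series Σ_{n≥0} Rⁿ, and all entries of (I − R)⁻¹ are nonnegative. -/

import Mathlib

open Matrix Finset

section Aux
variable {E : Type*} [Fintype E] [DecidableEq E]

lemma neumann_pow_nonneg (R : Matrix E E ℝ) (hRnn : ∀ i j, 0 ≤ R i j) :
    ∀ (n : ℕ) (i j : E), 0 ≤ (R ^ n) i j := by
  intro n
  induction n with
  | zero =>
    intro i j
    rw [pow_zero, Matrix.one_apply]
    split <;> norm_num
  | succ n ih =>
    intro i j
    rw [pow_succ, Matrix.mul_apply]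
    exact Finset.sum_nonneg fun k _ => mul_nonneg (ih i k) (hRnn k j)

lemma neumann_rowsum_mul (A B : Matrix E E ℝ) (i : E) :
    ∑ j, (A * B) i j = ∑ k, A i k * ∑ j, B k j := by
  simp only [Matrix.mul_apply, Finset.mul_sum]
  exact Finset.sum_comm

lemma neumann_rowsum_le_one (R : Matrix E E ℝ) (hRnn : ∀ i j, 0 ≤ R i j)
    (hrow : ∀ i, ∑ j, R i j ≤ 1) : ∀ (n : ℕ) (i : E), ∑ j, (R ^ n) i j ≤ 1 := by
  intro n
  induction n with
  | zero => intro i; simp [Matrix.one_apply]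
  | succ n ih =>
    intro i
    rw [pow_succ, neumann_rowsum_mul]
    calc ∑ k, (R ^ n) i k * ∑ j, R k j ≤ ∑ k, (R ^ n) i k * 1 :=
          Finset.sum_le_sum fun k _ =>
            mul_le_mul_of_nonneg_left (hrow k) (neumann_pow_nonneg R hRnn n i k)
      _ = ∑ k, (R ^ n) i k := by simp
      _ ≤ 1 := ih i

lemma neumann_rowsum_antitone (R : Matrix E E ℝ) (hRnn : ∀ i j, 0 ≤ R i j)
    (hrow : ∀ i, ∑ j, R i j ≤ 1) {n m : ℕ} (hnm : n ≤ m) (i : E) :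
    ∑ j, (R ^ m) i j ≤ ∑ j, (R ^ n) i j := by
  induction m, hnm using Nat.le_induction with
  | base => exact le_refl _
  | succ m hm ih =>
    refine le_trans ?_ ih
    rw [pow_succ, neumann_rowsum_mul]
    calc ∑ k, (R ^ m) i k * ∑ j, R k j ≤ ∑ k, (R ^ m) i k * 1 :=
          Finset.sum_le_sum fun k _ =>
            mul_le_mul_of_nonneg_left (hrow k) (neumann_pow_nonneg R hRnn m i k)
      _ = ∑ j, (R ^ m) i j := by simp

lemma neumann_path_le (R : Matrix E E ℝ) (hRnn : ∀ i j, 0 ≤ R i j) :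
    ∀ (l : ℕ) (p : Fin (l + 1) → E),
      ∏ h : Fin l, R (p h.castSucc) (p h.succ) ≤ (R ^ l) (p 0) (p (Fin.last l)) := by
  intro l
  induction l with
  | zero =>
    intro p
    simp [Fin.last, Matrix.one_apply]
  | succ l ih =>
    intro p
    rw [Fin.prod_univ_succ, pow_succ', Matrix.mul_apply]
    have key : ∏ i : Fin l, R (p i.succ.castSucc) (p i.succ.succ)
        ≤ (R ^ l) (p 1) (p (Fin.last (l + 1))) := by
      have := ih (fun h => p h.succ)
      simp only [Fin.succ_last] at this
      refine le_trans (le_of_eq ?_) this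
      refine Finset.prod_congr rfl fun i _ => ?_
      rw [Fin.succ_castSucc]
    calc R (p 0) (p 1) * ∏ i : Fin l, R (p (Fin.succ i).castSucc) (p (Fin.succ i).succ)
        ≤ R (p 0) (p 1) * (R ^ l) (p 1) (p (Fin.last (l + 1))) := by
          refine mul_le_mul_of_nonneg_left ?_ (hRnn _ _)
          simpa using key
      _ ≤ ∑ k, R (p 0) k * (R ^ l) k (p (Fin.last (l + 1))) := by
          refine Finset.single_le_sum (f := fun k => R (p 0) k * (R ^ l) k (p (Fin.last (l + 1))))
            (fun k _ => mul_nonneg (hRnn _ _) (neumann_pow_nonneg R hRnn l _ _)) (Finset.mem_univ _)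

end Aux

/-- Under the nonnegativity, row-sum and out-connectedness assumptions,
the matrix `I - R` is invertible, its inverse is given by the convergent Neumann series
`∑ n, R ^ n`, and all the entries of `(I - R)⁻¹` are nonnegative. -/
theorem neumann_series_inverse
    {E : Type*} [Fintype E] [DecidableEq E] [Nonempty E]
    (S : Finset E) (hS : S.Nonempty)
    (R : Matrix E E ℝ)
    (hRnn : ∀ i j, 0 ≤ R i j)
    (hrow1 : ∀ i, i ∉ S → ∑ j, R i j = 1)
    (hrow0 : ∀ i, i ∈ S → ∑ j, R i j = 0)
    (hout : ∀ i₀ : E, ∃ (l : ℕ) (p : Fin (l + 1) → E), p 0 = i₀ ∧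
      p (Fin.last l) ∈ S ∧ 0 < ∏ h : Fin l, R (p h.castSucc) (p h.succ)) :
    IsUnit (1 - R) ∧ Summable (fun n : ℕ => R ^ n) ∧
      (1 - R)⁻¹ = ∑' n : ℕ, R ^ n ∧ ∀ i j, 0 ≤ (1 - R)⁻¹ i j := by
  have hrow : ∀ i, ∑ j, R i j ≤ 1 := by
    intro i
    by_cases h : i ∈ S
    · rw [hrow0 i h]; norm_num
    · exact le_of_eq (hrow1 i h)
  have hpnn := neumann_pow_nonneg R hRnn
  have hσ1 := neumann_rowsum_le_one R hRnn hrow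
  have hmono := fun {n m : ℕ} (h : n ≤ m) => neumann_rowsum_antitone R hRnn hrow h
  -- for each i, some row sum of a power is < 1
  have hlt : ∀ i : E, ∃ n : ℕ, 1 ≤ n ∧ ∑ j, (R ^ n) i j < 1 := by
    intro i
    obtain ⟨l, p, hp0, hps, hppos⟩ := hout i
    refine ⟨l + 1, le_add_self, ?_⟩
    set s := p (Fin.last l) with hs
    have hRls : 0 < (R ^ l) i s := by
      have := neumann_path_le R hRnn l p
      rw [hp0] at this
      exact lt_of_lt_of_le hppos this
    have : ∑ j, (R ^ (l + 1)) i j ≤ ∑ j, (R ^ l) i j - (R ^ l) i s := by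
      rw [pow_succ, neumann_rowsum_mul]
      have hsplit : ∑ k, (R ^ l) i k * ∑ j, R k j
          = ∑ k ∈ Finset.univ.erase s, (R ^ l) i k * ∑ j, R k j := by
        rw [Finset.sum_erase_eq_sub (Finset.mem_univ s), hrow0 s hps]
        ring
      rw [hsplit]
      calc ∑ k ∈ Finset.univ.erase s, (R ^ l) i k * ∑ j, R k j
          ≤ ∑ k ∈ Finset.univ.erase s, (R ^ l) i k * 1 :=
            Finset.sum_le_sum fun k _ => mul_le_mul_of_nonneg_left (hrow k) (hpnn l i k)
        _ = ∑ k ∈ Finset.univ.erase s, (R ^ l) i k := by simp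
        _ = ∑ j, (R ^ l) i j - (R ^ l) i s := Finset.sum_erase_eq_sub (Finset.mem_univ s)
    calc ∑ j, (R ^ (l + 1)) i j ≤ ∑ j, (R ^ l) i j - (R ^ l) i s := this
      _ ≤ 1 - (R ^ l) i s := by linarith [hσ1 l i]
      _ < 1 := by linarith
  -- uniform power M with all row sums < 1
  choose nfun hn1 hnlt using hlt
  set M : ℕ := Finset.univ.sup nfun with hM
  have hM1 : 1 ≤ M := le_trans (hn1 (Classical.arbitrary E))
    (Finset.le_sup (Finset.mem_univ _))
  have hMlt : ∀ i, ∑ j, (R ^ M) i j < 1 := fun i =>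
    lt_of_le_of_lt (hmono (Finset.le_sup (Finset.mem_univ i)) i) (hnlt i)
  -- the contraction constant
  set c : ℝ := max (1 / 2) (Finset.univ.sup' Finset.univ_nonempty fun i => ∑ j, (R ^ M) i j)
    with hc
  have hc0 : 0 < c := lt_of_lt_of_le (by norm_num) (le_max_left _ _)
  have hc1 : c < 1 := by
    refine max_lt (by norm_num) ?_
    exact (Finset.sup'_lt_iff _).2 fun i _ => hMlt i
  have hcM : ∀ i, ∑ j, (R ^ M) i j ≤ c :=
    fun i => le_trans (Finset.le_sup' (fun i => ∑ j, (R ^ M) i j) (Finset.mem_univ i)) (le_max_right _ _)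
  -- row sums of R^(k*M) bounded by c^k
  have hck : ∀ (k : ℕ) (i : E), ∑ j, (R ^ (k * M)) i j ≤ c ^ k := by
    intro k
    induction k with
    | zero => intro i; simpa using hσ1 0 i
    | succ k ih =>
      intro i
      have : R ^ ((k + 1) * M) = R ^ M * R ^ (k * M) := by
        rw [← pow_add]; ring_nf
      rw [this, neumann_rowsum_mul]
      calc ∑ t, (R ^ M) i t * ∑ j, (R ^ (k * M)) t j
          ≤ ∑ t, (R ^ M) i t * c ^ k :=
            Finset.sum_le_sum fun t _ => mul_le_mul_of_nonneg_left (ih t) (hpnn M i t)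
        _ = (∑ t, (R ^ M) i t) * c ^ k := by rw [← Finset.sum_mul]
        _ ≤ c * c ^ k := mul_le_mul_of_nonneg_right (hcM i) (pow_nonneg hc0.le k)
        _ = c ^ (k + 1) := by ring
  -- entrywise geometric-type bound
  have hentry : ∀ (n : ℕ) (i j : E), (R ^ n) i j ≤ c ^ (n / M) := by
    intro n i j
    have h1 : (R ^ n) i j ≤ ∑ j', (R ^ n) i j' :=
      Finset.single_le_sum (fun k _ => hpnn n i k) (Finset.mem_univ j)
    have h2 : ∑ j', (R ^ n) i j' ≤ ∑ j', (R ^ (n / M * M)) i j' :=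
      hmono (Nat.div_mul_le_self n M) i
    exact le_trans h1 (le_trans h2 (hck (n / M) i))
  -- true geometric bound
  set d : ℝ := c ^ ((M : ℝ)⁻¹) with hd
  have hd0 : 0 ≤ d := Real.rpow_nonneg hc0.le _
  have hd1 : d < 1 := Real.rpow_lt_one hc0.le hc1 (by positivity)
  have hgeom : ∀ n : ℕ, c ^ (n / M) ≤ c⁻¹ * d ^ n := by
    intro n
    have hMR : (0 : ℝ) < M := by exact_mod_cast hM1
    have hfloor : (n : ℝ) / M - 1 ≤ ((n / M : ℕ) : ℝ) := by
      have h : n < (n / M + 1) * M := by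
        have h1 := (Nat.div_add_mod n M).symm
        have h2 := Nat.mod_lt n (show 0 < M by omega)
        calc n = M * (n / M) + n % M := h1
          _ < M * (n / M) + M := Nat.add_lt_add_left h2 _
          _ = (n / M + 1) * M := by ring
      have : (n : ℝ) < ((n / M : ℕ) + 1) * M := by exact_mod_cast h
      rw [div_sub_one hMR.ne', div_le_iff₀ hMR]
      linarith
    calc c ^ (n / M) = c ^ (((n / M : ℕ) : ℝ)) := by rw [Real.rpow_natCast]
      _ ≤ c ^ ((n : ℝ) / M - 1) := Real.rpow_le_rpow_of_exponent_ge hc0 hc1.le hfloor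
      _ = c⁻¹ * d ^ n := by
          rw [Real.rpow_sub hc0, Real.rpow_one, hd, ← Real.rpow_natCast (c ^ ((M:ℝ)⁻¹)) n,
            ← Real.rpow_mul hc0.le, mul_comm ((M:ℝ)⁻¹), ← div_eq_mul_inv (n:ℝ)]
          ring
  -- entrywise summability
  have hsumE : ∀ i j, Summable fun n : ℕ => (R ^ n) i j := by
    intro i j
    refine Summable.of_nonneg_of_le (fun n => hpnn n i j)
      (fun n => le_trans (hentry n i j) (hgeom n)) ?_
    exact (summable_geometric_of_lt_one hd0 hd1).mul_left _
  have hsum : Summable (fun n : ℕ => R ^ n) :=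
    Pi.summable.2 fun i => Pi.summable.2 fun j => hsumE i j
  -- limit of powers is zero
  have hpow0 : Filter.Tendsto (fun n : ℕ => R ^ n) Filter.atTop (nhds 0) :=
    hsum.tendsto_atTop_zero
  -- telescoping sum
  have htel : HasSum (fun n : ℕ => R ^ n - R ^ (n + 1)) 1 := by
    have hs : Summable fun n : ℕ => R ^ n - R ^ (n + 1) :=
      hsum.sub (hsum.comp_injective (add_left_injective 1))
    have h1 : Filter.Tendsto (fun m : ℕ => ∑ n ∈ Finset.range m, (R ^ n - R ^ (n + 1)))
        Filter.atTop (nhds 1) := by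
      have : ∀ m : ℕ, ∑ n ∈ Finset.range m, (R ^ n - R ^ (n + 1)) = 1 - R ^ m := by
        intro m
        rw [Finset.sum_range_sub' (fun n => R ^ n) m, pow_zero]
      simp only [this]
      simpa using (tendsto_const_nhds (x := (1 : Matrix E E ℝ))).sub hpow0
    have h2 := hs.hasSum.tendsto_sum_nat
    have := tendsto_nhds_unique h2 h1
    rw [← this]
    exact hs.hasSum
  set B : Matrix E E ℝ := ∑' n : ℕ, R ^ n with hB
  have hleft : (1 - R) * B = 1 := by
    rw [hB, ← Summable.tsum_mul_left _ hsum]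
    have : ∀ n : ℕ, (1 - R) * R ^ n = R ^ n - R ^ (n + 1) := by
      intro n
      rw [sub_mul, one_mul, ← pow_succ']
    simp only [this]
    exact htel.tsum_eq
  have hright : B * (1 - R) = 1 := by
    rw [hB, ← Summable.tsum_mul_right _ hsum]
    have : ∀ n : ℕ, R ^ n * (1 - R) = R ^ n - R ^ (n + 1) := by
      intro n
      rw [mul_sub, mul_one, ← pow_succ]
    simp only [this]
    exact htel.tsum_eq
  have hunit : IsUnit (1 - R) := ⟨⟨1 - R, B, hleft, hright⟩, rfl⟩
  have hinv : (1 - R)⁻¹ = B := Matrix.inv_eq_right_inv hleft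
  refine ⟨hunit, hsum, hinv, ?_⟩
  intro i j
  rw [hinv, hB]
  erw [tsum_apply hsum, tsum_apply (Pi.summable.1 hsum i)]
  exact tsum_nonneg fun n => hpnn n i j
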